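/- Let k > 0, θ > 0, Δq > 0, and let f_Γ(ε) = ε^{k−1}·exp(−ε/θ) / (Γ(k)·θ^k) for ε > 0 be the Gamma density with shape k and scale θ. Let g(x) = ∫_0^∞ f_Γ(ε)·(ε/2)·exp(−ε·|x|) dε be the corresponding mixture Laplace density. Then the mechanism is ε₀-differentially private with ε₀ = (k+1)·ln(1 + Δq·θ): for every measurable set S ⊆ ℝ and all a, a′ ∈ ℝ with |a − a′| ≤ Δq, ∫_S g(x − a) dx ≤ (1 + Δq·θ)^{k+1} · ∫_S g(x − a′) dx. -/

import Mathlib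

open MeasureTheory Real

/-- The Randomized DP Laplace mechanism whose reciprocal scale is Gamma-distributed with
shape `k` and scale `θ` satisfies `(k+1)·ln(1 + Δq·θ)`-differential privacy: probabilities
change by a factor of at most `(1 + Δq·θ)^{k+1}` under shifts of size at most `Δq`. -/
theorem gamma_mixture_laplace_dp
    (k θ Δq : ℝ) (hk : 0 < k) (hθ : 0 < θ) (hΔq : 0 < Δq)
    (fΓ : ℝ → ℝ)
    (hfΓ : ∀ ε : ℝ, 0 < ε →
      fΓ ε = ε ^ (k - 1) * Real.exp (-(ε / θ)) / (Real.Gamma k * θ ^ k))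
    (g : ℝ → ℝ)
    (hg : ∀ x : ℝ, g x = ∫ ε in Set.Ioi (0 : ℝ), fΓ ε * ((ε / 2) * Real.exp (-(ε * |x|)))) :
    ∀ S : Set ℝ, MeasurableSet S → ∀ a a' : ℝ, |a - a'| ≤ Δq →
      ∫ x in S, g (x - a) ≤ (1 + Δq * θ) ^ (k + 1) * ∫ x in S, g (x - a') := by
  have hΓk : 0 < Real.Gamma k := Real.Gamma_pos_of_pos hk
  have hθk : 0 < θ ^ k := Real.rpow_pos_of_pos hθ k
  set C : ℝ := k * θ / 2 with hC
  have hCpos : 0 < C := by positivity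
  -- Closed form for g
  have hgc : ∀ x : ℝ, g x = C * (1 + θ * |x|) ^ (-(k + 1)) := by
    intro x
    have hr : 0 < 1 / θ + |x| := by positivity
    have hb : 0 < 1 + θ * |x| := by positivity
    rw [hg x]
    have hcong : ∀ ε ∈ Set.Ioi (0 : ℝ),
        fΓ ε * ((ε / 2) * Real.exp (-(ε * |x|)))
          = (1 / (2 * Real.Gamma k * θ ^ k)) *
            (ε ^ ((k + 1) - 1) * Real.exp (-((1 / θ + |x|) * ε))) := by
      intro ε hε
      rw [hfΓ ε hε]
      have h1 : ε ^ ((k + 1) - 1) = ε ^ (k - 1) * ε := by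
        rw [show (k + 1) - 1 = (k - 1) + 1 by ring, Real.rpow_add_one (ne_of_gt hε)]
      have h2 : Real.exp (-((1 / θ + |x|) * ε))
          = Real.exp (-(ε / θ)) * Real.exp (-(ε * |x|)) := by
        rw [← Real.exp_add]; congr 1; field_simp; ring
      rw [h1, h2]
      field_simp
    rw [setIntegral_congr_fun measurableSet_Ioi hcong, integral_const_mul,
      Real.integral_rpow_mul_exp_neg_mul_Ioi (by linarith : (0:ℝ) < k + 1) hr]
    have hinv : 1 / (1 / θ + |x|) = θ / (1 + θ * |x|) := by
      rw [div_eq_div_iff hr.ne' hb.ne']; field_simp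
    rw [hinv, Real.Gamma_add_one (ne_of_gt hk)]
    rw [Real.div_rpow hθ.le hb.le, Real.rpow_neg hb.le,
      Real.rpow_add hθ k 1, Real.rpow_one]
    rw [div_eq_mul_inv (θ ^ k * θ)]
    field_simp [hC]
    ring
  have hb1 : ∀ y : ℝ, (0:ℝ) < 1 + θ * |y| := fun y => by positivity
  have hcp : (0:ℝ) < 1 + Δq * θ := by positivity
  have hp : (0:ℝ) ≤ k + 1 := by linarith
  -- integrability of shifted g
  have hgint : ∀ b : ℝ, Integrable (fun x => g (x - b)) := by
    intro b
    have hcont : Continuous fun x : ℝ => C * (1 + θ * |x - b|) ^ (-(k + 1)) := by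
      exact continuous_const.mul ((continuous_const.add (continuous_const.mul
        ((continuous_id.sub continuous_const).abs))).rpow_const
        (fun x => Or.inl (ne_of_gt (hb1 _))))
    have hbase : Integrable (fun x : ℝ => (1 + ‖x‖) ^ (-(k + 1))) :=
      integrable_one_add_norm (by simpa using by linarith : ((Module.finrank ℝ ℝ : ℝ) < k + 1))
    set m : ℝ := min 1 θ / (1 + |b|) with hm
    have hmpos : 0 < m := by positivity
    refine ((MeasureTheory.Integrable.const_mul hbase (C * m ^ (-(k+1)))).mono'
      ((hcont.aestronglyMeasurable).congr ?_) ?_)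
    · filter_upwards with x
      exact (hgc (x - b)).symm
    · filter_upwards with x
      have hxb : m * (1 + |x|) ≤ 1 + θ * |x - b| := by
        have h1 : |x| ≤ |x - b| + |b| := by
          calc |x| = |(x - b) + b| := by ring_nf
          _ ≤ |x - b| + |b| := abs_add_le _ _
        have hmin1 : min 1 θ ≤ 1 := min_le_left _ _
        have hminθ : min 1 θ ≤ θ := min_le_right _ _
        have hminpos : 0 < min 1 θ := lt_min one_pos hθ
        have hbb : 0 ≤ |b| := abs_nonneg b
        have hxx : 0 ≤ |x - b| := abs_nonneg _
        rw [hm, div_mul_eq_mul_div, div_le_iff₀ (by positivity)]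
        nlinarith [mul_le_mul_of_nonneg_left h1 hminpos.le,
          mul_le_mul_of_nonneg_right hminθ hxx,
          mul_le_mul_of_nonneg_right hmin1 hbb,
          mul_nonneg (mul_nonneg hθ.le hxx) hbb]
      have h2 : (1 + θ * |x - b|) ^ (-(k+1)) ≤ (m * (1 + |x|)) ^ (-(k+1)) :=
        Real.rpow_le_rpow_of_nonpos (by positivity) hxb (by linarith)
      have h3 : (m * (1 + |x|)) ^ (-(k+1)) = m ^ (-(k+1)) * (1 + |x|) ^ (-(k+1)) :=
        Real.mul_rpow hmpos.le (by positivity)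
      have hnn : 0 ≤ g (x - b) := by
        rw [hgc]; positivity
      rw [Real.norm_eq_abs, abs_of_nonneg hnn, hgc]
      have : (1 + |x|) ^ (-(k+1)) = (1 + ‖x‖) ^ (-(k+1)) := by rw [Real.norm_eq_abs]
      calc C * (1 + θ * |x - b|) ^ (-(k + 1))
          ≤ C * (m ^ (-(k+1)) * (1 + |x|) ^ (-(k+1))) := by
            rw [← h3]; exact mul_le_mul_of_nonneg_left h2 hCpos.le
        _ = C * m ^ (-(k+1)) * (1 + ‖x‖) ^ (-(k + 1)) := by
            rw [← this]; ring
  intro S hS a a' haa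
  -- pointwise bound
  have hpt : ∀ x : ℝ, g (x - a) ≤ (1 + Δq * θ) ^ (k + 1) * g (x - a') := by
    intro x
    rw [hgc, hgc]
    set u : ℝ := 1 + θ * |x - a| with hu
    set v : ℝ := 1 + θ * |x - a'| with hv
    have hup : 0 < u := hb1 _
    have hvp : 0 < v := hb1 _
    have hvcu : v ≤ (1 + Δq * θ) * u := by
      have h1 : |x - a'| ≤ |x - a| + Δq := by
        calc |x - a'| = |(x - a) + (a - a')| := by ring_nf
        _ ≤ |x - a| + |a - a'| := abs_add_le _ _
        _ ≤ |x - a| + Δq := by linarith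
      have h0 : 0 ≤ |x - a| := abs_nonneg _
      rw [hv, hu]
      nlinarith [mul_le_mul_of_nonneg_left h1 hθ.le,
        mul_nonneg (mul_nonneg hΔq.le hθ.le) (mul_nonneg hθ.le h0)]
    have key : v ^ (k+1) ≤ (1 + Δq * θ) ^ (k+1) * u ^ (k+1) := by
      calc v ^ (k+1) ≤ ((1 + Δq * θ) * u) ^ (k+1) :=
            Real.rpow_le_rpow hvp.le hvcu hp
        _ = (1 + Δq * θ) ^ (k+1) * u ^ (k+1) := Real.mul_rpow hcp.le hup.le
    have hupp : 0 < u ^ (k+1) := Real.rpow_pos_of_pos hup _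
    have hvpp : 0 < v ^ (k+1) := Real.rpow_pos_of_pos hvp _
    have hubd : u ^ (-(k+1)) ≤ (1 + Δq * θ) ^ (k+1) * v ^ (-(k+1)) := by
      rw [Real.rpow_neg hup.le, Real.rpow_neg hvp.le, ← one_div,
        show (1 + Δq * θ) ^ (k+1) * (v ^ (k+1))⁻¹ = (1 + Δq * θ) ^ (k+1) / v ^ (k+1) from
          (div_eq_mul_inv _ _).symm,
        div_le_div_iff₀ hupp hvpp]
      linarith
    calc C * u ^ (-(k + 1)) ≤ C * ((1 + Δq * θ) ^ (k+1) * v ^ (-(k+1))) :=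
          mul_le_mul_of_nonneg_left hubd hCpos.le
      _ = (1 + Δq * θ) ^ (k + 1) * (C * v ^ (-(k + 1))) := by ring
  have hint1 : IntegrableOn (fun x => g (x - a)) S := (hgint a).integrableOn
  have hint2 : IntegrableOn (fun x => (1 + Δq * θ) ^ (k + 1) * g (x - a')) S :=
    ((hgint a').const_mul _).integrableOn
  calc ∫ x in S, g (x - a) ≤ ∫ x in S, (1 + Δq * θ) ^ (k + 1) * g (x - a') :=
        integral_mono hint1 hint2 fun x => hpt x
    _ = (1 + Δq * θ) ^ (k + 1) * ∫ x in S, g (x - a') := integral_const_mul _ _
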